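/- Fix reals x, y > 0 and let Ξ denote evaluation at ν_b = x, ν_w = y. Let F ∈ ℝ_{≥0}[s, ν_b, ν_w][[t]] be a series whose monomials t^m s^g ν_b^a ν_w^b all satisfy m ≥ a + b. Define Ω := (1/3)(D_t + D_w − D_b − 1) ∘ Λ − (t ν_w D_t + t(1 − ν_b ν_w)∂_b)² with Λ := 2t²((ν_w² + ν_b) D_t + ν_w(1 − ν_b ν_w) ∂_b + (1 − ν_b ν_w) ∂_w). Then, coefficientwise in s and t: Ξ(Ω F) ≤ (4t²/3) (y² + x + y/x + 1/y) (D_t + 2)(D_t (Ξ F)). -/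

import Mathlib

namespace Stmt17

/-- Formal power series in t, s, ν_b, ν_w with real coefficients
(variable 0 = t, 1 = s, 2 = ν_b, 3 = ν_w). -/
abbrev R4 : Type := MvPowerSeries (Fin 4) ℝ

noncomputable def T : R4 := MvPowerSeries.X 0
noncomputable def B : R4 := MvPowerSeries.X 2
noncomputable def W : R4 := MvPowerSeries.X 3

/-- D_t = t ∂/∂t. -/
noncomputable def Dt (f : R4) : R4 := fun d => (d 0 : ℝ) * f d
/-- D_b = ν_b ∂/∂ν_b. -/
noncomputable def Db (f : R4) : R4 := fun d => (d 2 : ℝ) * f d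
/-- D_w = ν_w ∂/∂ν_w. -/
noncomputable def Dw (f : R4) : R4 := fun d => (d 3 : ℝ) * f d
/-- ∂/∂ν_b. -/
noncomputable def pb (f : R4) : R4 := fun d => ((d 2 : ℕ) + 1 : ℝ) * f (d + Finsupp.single 2 1)
/-- ∂/∂ν_w. -/
noncomputable def pw (f : R4) : R4 := fun d => ((d 3 : ℕ) + 1 : ℝ) * f (d + Finsupp.single 3 1)

/-- Λ := 2t²((ν_w² + ν_b) D_t + ν_w(1 − ν_b ν_w) ∂_b + (1 − ν_b ν_w) ∂_w). -/
noncomputable def Lam (f : R4) : R4 :=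
  2 * T ^ 2 * ((W ^ 2 + B) * Dt f + W * (1 - B * W) * pb f + (1 - B * W) * pw f)

/-- The first-order operator t ν_w D_t + t(1 − ν_b ν_w)∂_b. -/
noncomputable def Psi (f : R4) : R4 := T * W * Dt f + T * (1 - B * W) * pb f

/-- Ω := (1/3)(D_t + D_w − D_b − 1) ∘ Λ − (t ν_w D_t + t(1 − ν_b ν_w)∂_b)². -/
noncomputable def Om (f : R4) : R4 :=
  (1 / 3 : ℝ) • (Dt (Lam f) + Dw (Lam f) - Db (Lam f) - Lam f) - Psi (Psi f)

/-- Membership in the semiring 𝔸: all coefficients are nonnegative and every monomial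
t^m s^g ν_b^a ν_w^b appearing satisfies m ≥ a + b. -/
def A : Set R4 :=
  {f | ∀ d : Fin 4 →₀ ℕ, 0 ≤ MvPowerSeries.coeff (R := ℝ) d f ∧
    (MvPowerSeries.coeff (R := ℝ) d f ≠ 0 → d 2 + d 3 ≤ d 0)}

/-- The evaluation Ξ at ν_b = x, ν_w = y, producing a series in t and s given by its
coefficients; for F ∈ 𝔸 only exponents a + b ≤ m contribute, so the sum is finite. -/
noncomputable def Xi (x y : ℝ) (F : R4) : ℕ → ℕ → ℝ := fun m g =>
  ∑ a ∈ Finset.range (m + 1), ∑ b ∈ Finset.range (m + 1),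
    MvPowerSeries.coeff (R := ℝ)
      (Finsupp.single (0 : Fin 4) m + Finsupp.single 1 g
        + Finsupp.single 2 a + Finsupp.single 3 b) F * x ^ a * y ^ b

/-- (D_t + 2)(D_t h), coefficientwise on series in t and s. -/
def DtPlus2Dt (h : ℕ → ℕ → ℝ) : ℕ → ℕ → ℝ := fun m g => ((m : ℝ) + 2) * ((m : ℝ) * h m g)

/-- Multiplication by t^j acting on series in t and s. -/
def tmul (j : ℕ) (h : ℕ → ℕ → ℝ) : ℕ → ℕ → ℝ := fun m g =>
  if j ≤ m then h (m - j) g else 0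

/-! ### Auxiliary machinery -/

open Finsupp MvPowerSeries Finset

set_option linter.unusedTactic false
set_option linter.unusedVariables false

/-- The exponent `t^m s^g ν_b^a ν_w^b`. -/
noncomputable def E (m g a b : ℕ) : Fin 4 →₀ ℕ :=
  Finsupp.single 0 m + Finsupp.single 1 g + Finsupp.single 2 a + Finsupp.single 3 b

lemma E_app0 (m g a b : ℕ) : E m g a b 0 = m := by simp [E, Finsupp.single_apply]
lemma E_app1 (m g a b : ℕ) : E m g a b 1 = g := by simp [E, Finsupp.single_apply]
lemma E_app2 (m g a b : ℕ) : E m g a b 2 = a := by simp [E, Finsupp.single_apply]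
lemma E_app3 (m g a b : ℕ) : E m g a b 3 = b := by simp [E, Finsupp.single_apply]

lemma E_le {p q r m g a b : ℕ} : E p 0 q r ≤ E m g a b ↔ p ≤ m ∧ q ≤ a ∧ r ≤ b := by
  rw [Finsupp.le_def]
  constructor
  · intro h
    exact ⟨by simpa [E_app0] using h 0, by simpa [E_app2] using h 2, by simpa [E_app3] using h 3⟩
  · rintro ⟨h1, h2, h3⟩ i
    fin_cases i <;> simp [E_app0, E_app1, E_app2, E_app3, h1, h2, h3]

lemma E_sub (p q r m g a b : ℕ) : E m g a b - E p 0 q r = E (m-p) g (a-q) (b-r) := by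
  ext i
  fin_cases i <;> simp [Finsupp.tsub_apply, E_app0, E_app1, E_app2, E_app3]

lemma E_add2 (m g a b : ℕ) : E m g a b + Finsupp.single 2 1 = E m g (a+1) b := by
  ext i
  fin_cases i <;> simp [Finsupp.single_apply, E_app0, E_app1, E_app2, E_app3]

lemma E_add3 (m g a b : ℕ) : E m g a b + Finsupp.single 3 1 = E m g a (b+1) := by
  ext i
  fin_cases i <;> simp [Finsupp.single_apply, E_app0, E_app1, E_app2, E_app3]

lemma mon_mul_apply (r : ℝ) (e : Fin 4 →₀ ℕ) (f : R4) (d : Fin 4 →₀ ℕ) :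
    (MvPowerSeries.monomial (R := ℝ) e r * f) d = if e ≤ d then r * f (d - e) else 0 := by
  have := MvPowerSeries.coeff_monomial_mul (m := d) (n := e) (φ := f) (a := r)
  simpa [MvPowerSeries.coeff_apply] using this

lemma mon_eq (p q r : ℕ) :
    (MvPowerSeries.monomial (R := ℝ) (E p 0 q r) 1 : R4) = T ^ p * B ^ q * W ^ r := by
  rw [T, B, W, X_pow_eq, X_pow_eq, X_pow_eq, monomial_mul_monomial, monomial_mul_monomial]
  simp [E]

lemma two_mon_eq (p q r : ℕ) :
    (MvPowerSeries.monomial (R := ℝ) (E p 0 q r) 2 : R4) = 2 * (T ^ p * B ^ q * W ^ r) := by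
  rw [← mon_eq, ← map_ofNat (C : ℝ →+* R4) 2, ← monomial_zero_eq_C_apply, monomial_mul_monomial]
  simp

lemma add_apply' (f g : R4) (d : Fin 4 →₀ ℕ) : (f + g) d = f d + g d := rfl
lemma sub_apply' (f g : R4) (d : Fin 4 →₀ ℕ) : (f - g) d = f d - g d := rfl
lemma smul_apply' (r : ℝ) (f : R4) (d : Fin 4 →₀ ℕ) : (r • f) d = r * f d := rfl

lemma Lam_eq (f : R4) : Lam f =
    monomial (R := ℝ) (E 2 0 0 2) 2 * Dt f + monomial (R := ℝ) (E 2 0 1 0) 2 * Dt f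
  + monomial (R := ℝ) (E 2 0 0 1) 2 * pb f - monomial (R := ℝ) (E 2 0 1 2) 2 * pb f
  + monomial (R := ℝ) (E 2 0 0 0) 2 * pw f - monomial (R := ℝ) (E 2 0 1 1) 2 * pw f := by
  rw [Lam, two_mon_eq, two_mon_eq, two_mon_eq, two_mon_eq, two_mon_eq, two_mon_eq]; ring

lemma Psi_eq (f : R4) : Psi f =
    monomial (R := ℝ) (E 1 0 0 1) 1 * Dt f + monomial (R := ℝ) (E 1 0 0 0) 1 * pb f
  - monomial (R := ℝ) (E 1 0 1 1) 1 * pb f := by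
  rw [Psi, mon_eq, mon_eq, mon_eq]; ring

lemma Psi_apply (f : R4) (m g a b : ℕ) :
    Psi f (E m g a b) =
    (if 1 ≤ m ∧ 1 ≤ b then ((m-1 : ℕ) : ℝ) * f (E (m-1) g a (b-1)) else 0)
  + (if 1 ≤ m then ((a : ℝ) + 1) * f (E (m-1) g (a+1) b) else 0)
  - (if 1 ≤ m ∧ 1 ≤ a ∧ 1 ≤ b then (((a-1 : ℕ) : ℝ) + 1) * f (E (m-1) g (a-1+1) (b-1)) else 0) := by
  rw [Psi_eq, sub_apply', add_apply', mon_mul_apply, mon_mul_apply, mon_mul_apply]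
  simp only [E_le, E_sub, Nat.zero_le, true_and, and_true, Dt, pb, E_app0, E_app2,
    E_add2, Nat.sub_zero]
  split_ifs <;> ring

lemma Lam_apply (f : R4) (m g a b : ℕ) :
    Lam f (E m g a b) =
    (if 2 ≤ m ∧ 2 ≤ b then 2 * ((m-2 : ℕ) : ℝ) * f (E (m-2) g a (b-2)) else 0)
  + (if 2 ≤ m ∧ 1 ≤ a then 2 * ((m-2 : ℕ) : ℝ) * f (E (m-2) g (a-1) b) else 0)
  + (if 2 ≤ m ∧ 1 ≤ b then 2 * ((a : ℝ) + 1) * f (E (m-2) g (a+1) (b-1)) else 0)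
  - (if 2 ≤ m ∧ 1 ≤ a ∧ 2 ≤ b then 2 * (((a-1 : ℕ) : ℝ) + 1) * f (E (m-2) g (a-1+1) (b-2)) else 0)
  + (if 2 ≤ m then 2 * ((b : ℝ) + 1) * f (E (m-2) g a (b+1)) else 0)
  - (if 2 ≤ m ∧ 1 ≤ a ∧ 1 ≤ b then 2 * (((b-1 : ℕ) : ℝ) + 1) * f (E (m-2) g (a-1) (b-1+1)) else 0) := by
  rw [Lam_eq]
  rw [sub_apply', add_apply', sub_apply', add_apply', add_apply']
  rw [mon_mul_apply, mon_mul_apply, mon_mul_apply, mon_mul_apply, mon_mul_apply, mon_mul_apply]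
  simp only [E_le, E_sub, Nat.zero_le, true_and, and_true, Dt, pb, pw, E_app0, E_app2, E_app3,
    E_add2, E_add3, Nat.sub_zero]
  split_ifs <;> ring

lemma Om_apply (f : R4) (m g a b : ℕ) (hm : 2 ≤ m) :
    Om f (E m g a b) =
    (if 2 ≤ b then (((m:ℝ)+b-a-1)/3 * (2*((m:ℝ)-2-a)) - ((m:ℝ)-1-a)*((m:ℝ)-2-a))
        * f (E (m-2) g a (b-2)) else 0)
  + (if 1 ≤ a then (((m:ℝ)+b-a-1)/3 * (2*((m:ℝ)-2-b))) * f (E (m-2) g (a-1) b) else 0)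
  + (if 1 ≤ b then (((a:ℝ)+1) * (((m:ℝ)+b-a-1)*2/3 - (2*(m:ℝ)-4-2*a)))
        * f (E (m-2) g (a+1) (b-1)) else 0)
  + (((m:ℝ)+b-a-1)/3 * (2*((b:ℝ)+1))) * f (E (m-2) g a (b+1))
  - ((a:ℝ)+1)*((a:ℝ)+2) * f (E (m-2) g (a+2) b) := by
  have h1 : 1 ≤ m := by omega
  have h2 : 1 ≤ m - 1 := by omega
  have e1 : m - 1 - 1 = m - 2 := by omega
  rw [Om, sub_apply', smul_apply', sub_apply', sub_apply', add_apply']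
  simp only [Dt, Db, Dw, E_app0, E_app2, E_app3]
  rw [Lam_apply]
  simp only [Psi_apply]
  rcases Nat.lt_or_ge a 1 with ha | ha
  · have ha0 : a = 0 := by omega
    subst ha0
    rcases Nat.lt_or_ge b 1 with hb | hb
    · have hb0 : b = 0 := by omega
      subst hb0
      simp only [hm, h1, h2, e1, if_true, if_pos, and_true, true_and]
      norm_num
      push_cast [Nat.cast_sub hm, Nat.cast_sub h1]
      ring
    · rcases Nat.lt_or_ge b 2 with hb2 | hb2
      · have hb1 : b = 1 := by omega
        subst hb1
        simp only [hm, h1, h2, e1, if_true, if_pos, and_true, true_and]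
        norm_num
        push_cast [Nat.cast_sub hm, Nat.cast_sub h1]
        ring
      · have eb1 : b - 1 + 1 = b := by omega
        have eb2 : b - 1 - 1 = b - 2 := by omega
        have hb1 : 1 ≤ b := by omega
        have hbb : 1 ≤ b - 1 := by omega
        simp only [hm, h1, h2, hb1, hb2, hbb, e1, eb1, eb2, if_true, if_pos, and_true, true_and]
        norm_num
        push_cast [Nat.cast_sub hm, Nat.cast_sub h1, Nat.cast_sub hb1, Nat.cast_sub hb2]
        ring
  · have ea1 : a - 1 + 1 = a := by omega
    have ea2 : a + 1 - 1 + 1 = a + 1 := by omega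
    rcases Nat.lt_or_ge b 1 with hb | hb
    · have hb0 : b = 0 := by omega
      subst hb0
      simp only [hm, h1, h2, ha, e1, ea1, ea2, if_true, if_pos, and_true, true_and]
      norm_num
      push_cast [Nat.cast_sub hm, Nat.cast_sub h1, Nat.cast_sub ha]
      ring
    · rcases Nat.lt_or_ge b 2 with hb2 | hb2
      · have hb1 : b = 1 := by omega
        subst hb1
        simp only [hm, h1, h2, ha, e1, ea1, ea2, if_true, if_pos, and_true, true_and]
        norm_num
        push_cast [Nat.cast_sub hm, Nat.cast_sub h1, Nat.cast_sub ha]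
        ring
      · have eb1 : b - 1 + 1 = b := by omega
        have eb2 : b - 1 - 1 = b - 2 := by omega
        have hb1 : 1 ≤ b := by omega
        have hbb : 1 ≤ b - 1 := by omega
        simp only [hm, h1, h2, ha, hb1, hb2, hbb, e1, ea1, ea2, eb1, eb2,
          if_true, if_pos, and_true, true_and]
        norm_num
        push_cast [Nat.cast_sub hm, Nat.cast_sub h1, Nat.cast_sub ha, Nat.cast_sub hb1,
          Nat.cast_sub hb2]
        ring

lemma Om_apply_small (f : R4) (m g a b : ℕ) (hm : m < 2) : Om f (E m g a b) = 0 := by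
  rw [Om, sub_apply', smul_apply', sub_apply', sub_apply', add_apply']
  simp only [Dt, Db, Dw, E_app0, E_app2, E_app3]
  rw [Lam_apply]
  simp only [Psi_apply]
  have hnm : ¬ (2 ≤ m) := by omega
  rcases Nat.lt_or_ge m 1 with h0 | h1
  · have : m = 0 := by omega
    subst this
    norm_num
  · have : m = 1 := by omega
    subst this
    norm_num

lemma sum_shift_up (N δ : ℕ) (hδ : δ ≤ N) (v : ℕ → ℝ) (h1 : ∀ k, N - δ < k → v k = 0) :
    ∑ a ∈ Finset.range (N+1), (if δ ≤ a then v (a-δ) else 0) = ∑ k ∈ Finset.range (N+1), v k := by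
  have e1 : ∑ a ∈ Finset.range (N+1), (if δ ≤ a then v (a-δ) else 0)
      = ∑ a ∈ (Finset.range (N+1)).filter (fun a => δ ≤ a), v (a-δ) :=
    (Finset.sum_filter _ _).symm
  have hf : (Finset.range (N+1)).filter (fun a => δ ≤ a) = Finset.Ico δ (N+1) := by
    ext k; simp [Nat.lt_succ_iff]; omega
  rw [e1, hf, Finset.sum_Ico_eq_sum_range]
  simp only [Nat.add_sub_cancel_left]
  refine Finset.sum_subset (Finset.range_subset_range.mpr (by omega)) ?_
  intro k hk hk2
  exact h1 k (by simp only [Finset.mem_range] at hk hk2; omega)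

lemma sum_shift_down (N δ : ℕ) (v : ℕ → ℝ) (h0 : ∀ k, k < δ → v k = 0)
    (h1 : ∀ k, N < k → v k = 0) :
    ∑ a ∈ Finset.range (N+1), v (a+δ) = ∑ k ∈ Finset.range (N+1), v k := by
  have e1 : ∑ a ∈ Finset.range (N+1), v (a+δ) = ∑ k ∈ Finset.Ico δ (N+1+δ), v k := by
    rw [Finset.sum_Ico_eq_sum_range]
    simp only [Nat.add_sub_cancel]
    exact Finset.sum_congr rfl (fun i _ => by rw [add_comm])
  rw [e1]
  have e2 : ∑ k ∈ Finset.Ico δ (N+1+δ), v k = ∑ k ∈ Finset.range (N+1+δ), v k := by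
    rw [Finset.range_eq_Ico,
      ← Finset.sum_Ico_consecutive v (by omega : 0 ≤ δ) (by omega : δ ≤ N+1+δ)]
    have : ∑ k ∈ Finset.Ico 0 δ, v k = 0 :=
      Finset.sum_eq_zero (fun k hk => h0 k (by simpa using (Finset.mem_Ico.mp hk).2))
    rw [this, zero_add]
  rw [e2]
  exact (Finset.sum_subset (Finset.range_subset_range.mpr (by omega))
    (fun k hk hk2 => h1 k (by simp only [Finset.mem_range] at hk hk2; omega))).symm

lemma coeff1_le (M A B2 : ℝ) (hA : 0 ≤ A) (hB : 0 ≤ B2) (hM : 2 ≤ M) (hab : A + B2 ≤ M - 2) :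
    (M+B2-A+1)/3 * (2*(M-2-A)) - (M-1-A)*(M-2-A) ≤ 4/3*M*(M-2) := by
  nlinarith [mul_nonneg (by linarith : (0:ℝ) ≤ M-2-A-B2) (by linarith : (0:ℝ) ≤ M-2-A),
    mul_nonneg hB (by linarith : (0:ℝ) ≤ M-2-A), mul_nonneg hA hB, sq_nonneg (M-2-A),
    mul_nonneg hA (by linarith : (0:ℝ) ≤ M-2)]

lemma coeff2_le (M A B2 : ℝ) (hA : 0 ≤ A) (hB : 0 ≤ B2) (hM : 2 ≤ M) (hab : A + B2 ≤ M - 2) :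
    (M+B2-A-2)/3 * (2*(M-2-B2)) ≤ 4/3*M*(M-2) := by
  nlinarith [mul_nonneg (by linarith : (0:ℝ) ≤ M-2-A-B2) (by linarith : (0:ℝ) ≤ M-2-B2),
    mul_nonneg hA (by linarith : (0:ℝ) ≤ M-2-B2), mul_nonneg hB (by linarith : (0:ℝ) ≤ M-2),
    mul_nonneg hA hB, sq_nonneg (M-2-B2)]

lemma coeff3_nonpos (M A B2 : ℝ) (hA : 0 ≤ A) (hM : 2 ≤ M) (hB1 : 1 ≤ B2)
    (hab : A + 1 + (B2 - 1) ≤ M - 2) :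
    (A+1) * ((M+B2-A-1)*2/3 - (2*M-4-2*A)) ≤ 0 := by
  nlinarith [mul_nonneg (by linarith : (0:ℝ) ≤ A+1) (by linarith : (0:ℝ) ≤ 4*M-10-2*B2-4*A)]

lemma coeff4_le (M A B2 : ℝ) (hA : 0 ≤ A) (hM : 2 ≤ M) (hB1 : 1 ≤ B2)
    (hab : A + B2 ≤ M - 2) :
    (M+B2-A-2)/3 * (2*B2) ≤ 4/3*M*(M-2) := by
  nlinarith [mul_nonneg (by linarith : (0:ℝ) ≤ M-2-A-B2) (by linarith : (0:ℝ) ≤ B2),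
    mul_nonneg hA (by linarith : (0:ℝ) ≤ B2),
    mul_nonneg (by linarith : (0:ℝ) ≤ M-2-B2) (by linarith : (0:ℝ) ≤ B2 - 1),
    mul_nonneg (by linarith : (0:ℝ) ≤ M-2-B2) (by linarith : (0:ℝ) ≤ M - 2)]

set_option maxHeartbeats 1000000 in
/-- for x, y > 0 and F ∈ 𝔸, coefficientwise in s and t,
Ξ(Ω F) ≤ (4t²/3)(y² + x + y/x + 1/y)(D_t + 2)(D_t(Ξ F)). -/
theorem stmt_17 (x y : ℝ) (hx : 0 < x) (hy : 0 < y) (F : R4) (hF : F ∈ A) (m g : ℕ) :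
    Xi x y (Om F) m g
      ≤ 4 / 3 * (y ^ 2 + x + y / x + 1 / y) * tmul 2 (DtPlus2Dt (Xi x y F)) m g := by
  have hXi : ∀ (G : R4) (m' : ℕ), Xi x y G m' g
      = ∑ a ∈ Finset.range (m'+1), ∑ b ∈ Finset.range (m'+1), G (E m' g a b) * x^a * y^b := by
    intro G m'
    rfl
  rcases Nat.lt_or_ge m 2 with hm | hm
  · -- small case : everything is zero
    have hR : tmul 2 (DtPlus2Dt (Xi x y F)) m g = 0 := by
      simp only [tmul]
      rw [if_neg (by omega)]
    rw [hR, mul_zero, hXi]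
    apply le_of_eq
    apply Finset.sum_eq_zero
    intro a _
    apply Finset.sum_eq_zero
    intro b _
    rw [Om_apply_small F m g a b hm]
    ring
  · -- main case
    have hmR : (2:ℝ) ≤ (m:ℝ) := by exact_mod_cast hm
    have hcast : ((m-2:ℕ):ℝ) = (m:ℝ) - 2 := by
      push_cast [Nat.cast_sub hm]; ring
    -- coefficient facts
    have hc0 : ∀ a b : ℕ, 0 ≤ F (E (m-2) g a b) := by
      intro a b
      have := (hF (E (m-2) g a b)).1
      rwa [MvPowerSeries.coeff_apply] at this
    have hcb : ∀ a b : ℕ, F (E (m-2) g a b) ≠ 0 → a + b ≤ m - 2 := by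
      intro a b hne
      have := (hF (E (m-2) g a b)).2 (by rwa [MvPowerSeries.coeff_apply])
      rwa [E_app0, E_app2, E_app3] at this
    have hv : ∀ a b : ℕ, m - 2 < a + b → F (E (m-2) g a b) = 0 := by
      intro a b h
      by_contra hne
      exact absurd (hcb a b hne) (by omega)
    -- per-cell decomposition of the left-hand side
    have cell : ∀ a b : ℕ, Om F (E m g a b) * x^a * y^b =
        (if 2 ≤ b then (((m:ℝ)+b-a-1)/3 * (2*((m:ℝ)-2-a)) - ((m:ℝ)-1-a)*((m:ℝ)-2-a))
            * F (E (m-2) g a (b-2)) * x^a * y^b else 0)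
      + (if 1 ≤ a then (((m:ℝ)+b-a-1)/3 * (2*((m:ℝ)-2-b))) * F (E (m-2) g (a-1) b)
            * x^a * y^b else 0)
      + (if 1 ≤ b then (((a:ℝ)+1) * (((m:ℝ)+b-a-1)*2/3 - (2*(m:ℝ)-4-2*a)))
            * F (E (m-2) g (a+1) (b-1)) * x^a * y^b else 0)
      + (((m:ℝ)+b-a-1)/3 * (2*((b:ℝ)+1))) * F (E (m-2) g a (b+1)) * x^a * y^b
      - ((a:ℝ)+1)*((a:ℝ)+2) * F (E (m-2) g (a+2) b) * x^a * y^b := by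
      intro a b
      rw [Om_apply F m g a b hm]
      split_ifs <;> ring
    rw [hXi]
    have hLHS : ∑ a ∈ Finset.range (m+1), ∑ b ∈ Finset.range (m+1), Om F (E m g a b) * x^a * y^b
      = (∑ a ∈ Finset.range (m+1), ∑ b ∈ Finset.range (m+1),
          (if 2 ≤ b then (((m:ℝ)+b-a-1)/3 * (2*((m:ℝ)-2-a)) - ((m:ℝ)-1-a)*((m:ℝ)-2-a))
            * F (E (m-2) g a (b-2)) * x^a * y^b else 0))
      + (∑ a ∈ Finset.range (m+1), ∑ b ∈ Finset.range (m+1),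
          (if 1 ≤ a then (((m:ℝ)+b-a-1)/3 * (2*((m:ℝ)-2-b))) * F (E (m-2) g (a-1) b)
            * x^a * y^b else 0))
      + (∑ a ∈ Finset.range (m+1), ∑ b ∈ Finset.range (m+1),
          (if 1 ≤ b then (((a:ℝ)+1) * (((m:ℝ)+b-a-1)*2/3 - (2*(m:ℝ)-4-2*a)))
            * F (E (m-2) g (a+1) (b-1)) * x^a * y^b else 0))
      + (∑ a ∈ Finset.range (m+1), ∑ b ∈ Finset.range (m+1),
          (((m:ℝ)+b-a-1)/3 * (2*((b:ℝ)+1))) * F (E (m-2) g a (b+1)) * x^a * y^b)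
      - (∑ a ∈ Finset.range (m+1), ∑ b ∈ Finset.range (m+1),
          ((a:ℝ)+1)*((a:ℝ)+2) * F (E (m-2) g (a+2) b) * x^a * y^b) := by
      rw [Finset.sum_congr rfl (fun a _ => Finset.sum_congr rfl (fun b _ => cell a b))]
      simp only [Finset.sum_add_distrib, Finset.sum_sub_distrib]
    rw [hLHS]
    -- Reindex sum 1
    have hS1 : (∑ a ∈ Finset.range (m+1), ∑ b ∈ Finset.range (m+1),
          (if 2 ≤ b then (((m:ℝ)+b-a-1)/3 * (2*((m:ℝ)-2-a)) - ((m:ℝ)-1-a)*((m:ℝ)-2-a))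
            * F (E (m-2) g a (b-2)) * x^a * y^b else 0))
        = ∑ a ∈ Finset.range (m+1), ∑ k ∈ Finset.range (m+1),
          ((((m:ℝ)+((k:ℝ)+2)-a-1)/3 * (2*((m:ℝ)-2-a)) - ((m:ℝ)-1-a)*((m:ℝ)-2-a))
            * F (E (m-2) g a k) * x^a * y^(k+2)) := by
      refine Finset.sum_congr rfl (fun a _ => ?_)
      rw [← sum_shift_up m 2 hm
        (fun k => (((m:ℝ)+((k:ℝ)+2)-a-1)/3 * (2*((m:ℝ)-2-a)) - ((m:ℝ)-1-a)*((m:ℝ)-2-a))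
          * F (E (m-2) g a k) * x^a * y^(k+2))
        (fun k hk => by simp only [hv a k (by omega)]; ring)]
      refine Finset.sum_congr rfl (fun b _ => ?_)
      split_ifs with hb
      · rw [show b-2+2 = b from by omega]
        push_cast [Nat.cast_sub hb]
        ring
      · rfl
    -- Reindex sum 2
    have hS2 : (∑ a ∈ Finset.range (m+1), ∑ b ∈ Finset.range (m+1),
          (if 1 ≤ a then (((m:ℝ)+b-a-1)/3 * (2*((m:ℝ)-2-b))) * F (E (m-2) g (a-1) b)
            * x^a * y^b else 0))
        = ∑ k ∈ Finset.range (m+1), ∑ b ∈ Finset.range (m+1),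
          ((((m:ℝ)+b-((k:ℝ)+1)-1)/3 * (2*((m:ℝ)-2-b))) * F (E (m-2) g k b)
            * x^(k+1) * y^b) := by
      rw [← sum_shift_up m 1 (by omega)
        (fun k => ∑ b ∈ Finset.range (m+1),
          ((((m:ℝ)+b-((k:ℝ)+1)-1)/3 * (2*((m:ℝ)-2-b))) * F (E (m-2) g k b) * x^(k+1) * y^b))
        (fun k hk => Finset.sum_eq_zero (fun b _ => by simp only [hv k b (by omega)]; ring))]
      refine Finset.sum_congr rfl (fun a _ => ?_)
      split_ifs with ha
      · refine Finset.sum_congr rfl (fun b _ => ?_)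
        rw [show a-1+1 = a from by omega]
        push_cast [Nat.cast_sub ha]
        ring
      · exact Finset.sum_eq_zero (fun b _ => rfl)
    -- Reindex sum 4
    have hS4 : (∑ a ∈ Finset.range (m+1), ∑ b ∈ Finset.range (m+1),
          (((m:ℝ)+b-a-1)/3 * (2*((b:ℝ)+1))) * F (E (m-2) g a (b+1)) * x^a * y^b)
        = ∑ a ∈ Finset.range (m+1), ∑ k ∈ Finset.range (m+1),
          (if 1 ≤ k then (((m:ℝ)+k-a-2)/3 * (2*(k:ℝ))) * F (E (m-2) g a k) * x^a * y^(k-1)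
           else 0) := by
      refine Finset.sum_congr rfl (fun a _ => ?_)
      rw [← sum_shift_down m 1
        (fun k => if 1 ≤ k then (((m:ℝ)+k-a-2)/3 * (2*(k:ℝ))) * F (E (m-2) g a k) * x^a * y^(k-1)
           else 0)
        (fun k hk => by simp only [if_neg (show ¬ 1 ≤ k by omega)])
        (fun k hk => by simp only [if_pos (show 1 ≤ k by omega), hv a k (by omega)]; ring)]
      refine Finset.sum_congr rfl (fun b _ => ?_)
      rw [if_pos (by omega : 1 ≤ b + 1), show b+1-1 = b from rfl]
      push_cast
      ring
    rw [hS1, hS2, hS4]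
    -- the right-hand side
    have hKnn : (0:ℝ) ≤ 4/3*(m:ℝ)*((m:ℝ)-2) := by nlinarith
    have hRHS : 4 / 3 * (y ^ 2 + x + y / x + 1 / y) * tmul 2 (DtPlus2Dt (Xi x y F)) m g
        = (∑ a ∈ Finset.range (m+1), ∑ b ∈ Finset.range (m+1),
            4/3*(m:ℝ)*((m:ℝ)-2) * (F (E (m-2) g a b) * x^a * y^b) * y^2)
        + (∑ a ∈ Finset.range (m+1), ∑ b ∈ Finset.range (m+1),
            4/3*(m:ℝ)*((m:ℝ)-2) * (F (E (m-2) g a b) * x^a * y^b) * x)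
        + (∑ a ∈ Finset.range (m+1), ∑ b ∈ Finset.range (m+1),
            4/3*(m:ℝ)*((m:ℝ)-2) * (F (E (m-2) g a b) * x^a * y^b) * (y/x))
        + (∑ a ∈ Finset.range (m+1), ∑ b ∈ Finset.range (m+1),
            4/3*(m:ℝ)*((m:ℝ)-2) * (F (E (m-2) g a b) * x^a * y^b) * (1/y)) := by
      simp only [tmul, DtPlus2Dt, if_pos hm]
      rw [hXi F (m-2), hcast]
      have hext : ∑ a ∈ Finset.range (m-2+1), ∑ b ∈ Finset.range (m-2+1),
            F (E (m-2) g a b) * x^a * y^b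
          = ∑ a ∈ Finset.range (m+1), ∑ b ∈ Finset.range (m+1),
            F (E (m-2) g a b) * x^a * y^b := by
        have hinner : ∀ a : ℕ, ∑ b ∈ Finset.range (m-2+1), F (E (m-2) g a b) * x^a * y^b
            = ∑ b ∈ Finset.range (m+1), F (E (m-2) g a b) * x^a * y^b := by
          intro a
          refine Finset.sum_subset (Finset.range_subset_range.mpr (by omega)) ?_
          intro b hb hb2
          simp only [Finset.mem_range] at hb hb2
          rw [hv a b (by omega)]
          ring
        rw [Finset.sum_congr rfl (fun a _ => hinner a)]
        refine Finset.sum_subset (Finset.range_subset_range.mpr (by omega)) ?_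
        intro a ha ha2
        simp only [Finset.mem_range] at ha ha2
        refine Finset.sum_eq_zero (fun b _ => ?_)
        rw [hv a b (by omega)]
        ring
      rw [hext]
      have pull : ∀ K : ℝ, (∑ a ∈ Finset.range (m+1), ∑ b ∈ Finset.range (m+1),
            4/3*(m:ℝ)*((m:ℝ)-2) * (F (E (m-2) g a b) * x^a * y^b) * K)
          = (4/3*(m:ℝ)*((m:ℝ)-2)*K) * ∑ a ∈ Finset.range (m+1), ∑ b ∈ Finset.range (m+1),
            F (E (m-2) g a b) * x^a * y^b := by
        intro K
        rw [Finset.mul_sum]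
        refine Finset.sum_congr rfl (fun a _ => ?_)
        rw [Finset.mul_sum]
        refine Finset.sum_congr rfl (fun b _ => ?_)
        ring
      rw [pull (y^2), pull x, pull (y/x), pull (1/y)]
      ring
    rw [hRHS]
    -- now compare the five sums with the four sums
    have cast_ab : ∀ a b : ℕ, F (E (m-2) g a b) ≠ 0 → (a:ℝ) + (b:ℝ) ≤ (m:ℝ) - 2 := by
      intro a b hne
      have h := hcb a b hne
      have : ((a+b:ℕ):ℝ) ≤ ((m-2:ℕ):ℝ) := Nat.cast_le.mpr h
      rwa [hcast, Nat.cast_add] at this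
    have e1 : (∑ a ∈ Finset.range (m+1), ∑ k ∈ Finset.range (m+1),
          ((((m:ℝ)+((k:ℝ)+2)-a-1)/3 * (2*((m:ℝ)-2-a)) - ((m:ℝ)-1-a)*((m:ℝ)-2-a))
            * F (E (m-2) g a k) * x^a * y^(k+2)))
        ≤ (∑ a ∈ Finset.range (m+1), ∑ b ∈ Finset.range (m+1),
            4/3*(m:ℝ)*((m:ℝ)-2) * (F (E (m-2) g a b) * x^a * y^b) * y^2) := by
      refine Finset.sum_le_sum (fun a _ => Finset.sum_le_sum (fun k _ => ?_))
      by_cases hne : F (E (m-2) g a k) = 0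
      · rw [hne]; simp
      · have hab := cast_ab a k hne
        have hco := coeff1_le (m:ℝ) (a:ℝ) (k:ℝ) (Nat.cast_nonneg a) (Nat.cast_nonneg k) hmR hab
        have hpos : (0:ℝ) ≤ F (E (m-2) g a k) * x^a * y^k * y^2 := by
          have := hc0 a k
          positivity
        have hmul := mul_le_mul_of_nonneg_right hco hpos
        calc (((m:ℝ)+((k:ℝ)+2)-a-1)/3 * (2*((m:ℝ)-2-a)) - ((m:ℝ)-1-a)*((m:ℝ)-2-a))
              * F (E (m-2) g a k) * x^a * y^(k+2)
            = (((m:ℝ)+k-a+1)/3 * (2*((m:ℝ)-2-a)) - ((m:ℝ)-1-a)*((m:ℝ)-2-a))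
              * (F (E (m-2) g a k) * x^a * y^k * y^2) := by rw [pow_add]; ring
          _ ≤ 4/3*(m:ℝ)*((m:ℝ)-2) * (F (E (m-2) g a k) * x^a * y^k * y^2) := by
              refine mul_le_mul_of_nonneg_right ?_ hpos
              calc ((m:ℝ)+k-a+1)/3 * (2*((m:ℝ)-2-a)) - ((m:ℝ)-1-a)*((m:ℝ)-2-a)
                  = ((m:ℝ)+(k:ℝ)-(a:ℝ)+1)/3 * (2*((m:ℝ)-2-a)) - ((m:ℝ)-1-a)*((m:ℝ)-2-a) := by
                    ring
                _ ≤ 4/3*(m:ℝ)*((m:ℝ)-2) := hco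
          _ = 4/3*(m:ℝ)*((m:ℝ)-2) * (F (E (m-2) g a k) * x^a * y^k) * y^2 := by ring
    have e2 : (∑ k ∈ Finset.range (m+1), ∑ b ∈ Finset.range (m+1),
          ((((m:ℝ)+b-((k:ℝ)+1)-1)/3 * (2*((m:ℝ)-2-b))) * F (E (m-2) g k b)
            * x^(k+1) * y^b))
        ≤ (∑ a ∈ Finset.range (m+1), ∑ b ∈ Finset.range (m+1),
            4/3*(m:ℝ)*((m:ℝ)-2) * (F (E (m-2) g a b) * x^a * y^b) * x) := by
      refine Finset.sum_le_sum (fun a _ => Finset.sum_le_sum (fun b _ => ?_))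
      by_cases hne : F (E (m-2) g a b) = 0
      · rw [hne]; simp
      · have hab := cast_ab a b hne
        have hco := coeff2_le (m:ℝ) (a:ℝ) (b:ℝ) (Nat.cast_nonneg a) (Nat.cast_nonneg b) hmR hab
        have hpos : (0:ℝ) ≤ F (E (m-2) g a b) * x^a * y^b * x := by
          have := hc0 a b
          positivity
        calc (((m:ℝ)+b-((a:ℝ)+1)-1)/3 * (2*((m:ℝ)-2-b))) * F (E (m-2) g a b) * x^(a+1) * y^b
            = (((m:ℝ)+(b:ℝ)-(a:ℝ)-2)/3 * (2*((m:ℝ)-2-b)))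
              * (F (E (m-2) g a b) * x^a * y^b * x) := by rw [pow_succ]; ring
          _ ≤ 4/3*(m:ℝ)*((m:ℝ)-2) * (F (E (m-2) g a b) * x^a * y^b * x) :=
              mul_le_mul_of_nonneg_right hco hpos
          _ = 4/3*(m:ℝ)*((m:ℝ)-2) * (F (E (m-2) g a b) * x^a * y^b) * x := by ring
    have e3 : (∑ a ∈ Finset.range (m+1), ∑ b ∈ Finset.range (m+1),
          (if 1 ≤ b then (((a:ℝ)+1) * (((m:ℝ)+b-a-1)*2/3 - (2*(m:ℝ)-4-2*a)))
            * F (E (m-2) g (a+1) (b-1)) * x^a * y^b else 0)) ≤ 0 := by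
      refine Finset.sum_nonpos (fun a _ => Finset.sum_nonpos (fun b _ => ?_))
      split_ifs with hb
      · by_cases hne : F (E (m-2) g (a+1) (b-1)) = 0
        · rw [hne]; simp
        · have hab' := hcb (a+1) (b-1) hne
          have habR : (a:ℝ) + 1 + ((b:ℝ) - 1) ≤ (m:ℝ) - 2 := by
            have : ((a+1) + (b-1) : ℕ) ≤ m - 2 := hab'
            have h2 : (((a+1)+(b-1):ℕ):ℝ) ≤ ((m-2:ℕ):ℝ) := Nat.cast_le.mpr this
            rw [hcast] at h2
            push_cast [Nat.cast_sub hb] at h2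
            linarith
          have hco := coeff3_nonpos (m:ℝ) (a:ℝ) (b:ℝ) (Nat.cast_nonneg a) hmR
            (by exact_mod_cast hb) habR
          have hpos : (0:ℝ) ≤ F (E (m-2) g (a+1) (b-1)) * x^a * y^b := by
            have := hc0 (a+1) (b-1)
            positivity
          calc (((a:ℝ)+1) * (((m:ℝ)+b-a-1)*2/3 - (2*(m:ℝ)-4-2*a)))
                * F (E (m-2) g (a+1) (b-1)) * x^a * y^b
              = (((a:ℝ)+1) * (((m:ℝ)+b-a-1)*2/3 - (2*(m:ℝ)-4-2*a)))
                * (F (E (m-2) g (a+1) (b-1)) * x^a * y^b) := by ring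
            _ ≤ 0 := mul_nonpos_iff.mpr (Or.inr ⟨hco, hpos⟩)
      · exact le_refl 0
    have e4 : (∑ a ∈ Finset.range (m+1), ∑ k ∈ Finset.range (m+1),
          (if 1 ≤ k then (((m:ℝ)+k-a-2)/3 * (2*(k:ℝ))) * F (E (m-2) g a k) * x^a * y^(k-1)
           else 0))
        ≤ (∑ a ∈ Finset.range (m+1), ∑ b ∈ Finset.range (m+1),
            4/3*(m:ℝ)*((m:ℝ)-2) * (F (E (m-2) g a b) * x^a * y^b) * (1/y)) := by
      refine Finset.sum_le_sum (fun a _ => Finset.sum_le_sum (fun k _ => ?_))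
      split_ifs with hk
      · by_cases hne : F (E (m-2) g a k) = 0
        · rw [hne]; simp
        · have hab := cast_ab a k hne
          have hco := coeff4_le (m:ℝ) (a:ℝ) (k:ℝ) (Nat.cast_nonneg a) hmR
            (by exact_mod_cast hk) hab
          have hpos : (0:ℝ) ≤ F (E (m-2) g a k) * x^a * y^(k-1) := by
            have := hc0 a k
            positivity
          have hyk : y^k = y^(k-1) * y := by
            rw [← pow_succ]
            congr 1
            omega
          calc (((m:ℝ)+k-a-2)/3 * (2*(k:ℝ))) * F (E (m-2) g a k) * x^a * y^(k-1)
              = (((m:ℝ)+(k:ℝ)-(a:ℝ)-2)/3 * (2*(k:ℝ)))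
                * (F (E (m-2) g a k) * x^a * y^(k-1)) := by ring
            _ ≤ 4/3*(m:ℝ)*((m:ℝ)-2) * (F (E (m-2) g a k) * x^a * y^(k-1)) :=
                mul_le_mul_of_nonneg_right hco hpos
            _ = 4/3*(m:ℝ)*((m:ℝ)-2) * (F (E (m-2) g a k) * x^a * y^k) * (1/y) := by
                rw [hyk]
                field_simp
      · have := hc0 a k
        have : (0:ℝ) ≤ 4/3*(m:ℝ)*((m:ℝ)-2) * (F (E (m-2) g a k) * x^a * y^k) * (1/y) := by
          refine mul_nonneg (mul_nonneg hKnn ?_) (by positivity)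
          have := hc0 a k
          positivity
        linarith
    have e5 : (0:ℝ) ≤ ∑ a ∈ Finset.range (m+1), ∑ b ∈ Finset.range (m+1),
        ((a:ℝ)+1)*((a:ℝ)+2) * F (E (m-2) g (a+2) b) * x^a * y^b := by
      refine Finset.sum_nonneg (fun a _ => Finset.sum_nonneg (fun b _ => ?_))
      have := hc0 (a+2) b
      have h1 : (0:ℝ) ≤ ((a:ℝ)+1)*((a:ℝ)+2) := by positivity
      have h2 : (0:ℝ) ≤ x^a * y^b := by positivity
      calc (0:ℝ) = 0 * y^b := by ring
        _ ≤ ((a:ℝ)+1)*((a:ℝ)+2) * F (E (m-2) g (a+2) b) * x^a * y^b := by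
            refine mul_le_mul_of_nonneg_right ?_ (by positivity)
            refine mul_nonneg (mul_nonneg h1 this) (by positivity)
    have eR3 : (0:ℝ) ≤ ∑ a ∈ Finset.range (m+1), ∑ b ∈ Finset.range (m+1),
        4/3*(m:ℝ)*((m:ℝ)-2) * (F (E (m-2) g a b) * x^a * y^b) * (y/x) := by
      refine Finset.sum_nonneg (fun a _ => Finset.sum_nonneg (fun b _ => ?_))
      refine mul_nonneg (mul_nonneg hKnn ?_) (by positivity)
      have := hc0 a b
      positivity
    exact le_trans (sub_le_self _ e5) (add_le_add (add_le_add (add_le_add e1 e2) (e3.trans eR3)) e4)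

end Stmt17
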